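/- Let G be an ordered graph on vertex set {1,...,n} and let a,b ≥ 0 be integers. If the chromatic number of G is greater than 2^(a+b+1), then there exists an induced subgraph H of G such that χ(H) > 2^a and for every edge uv of H with u < v, the subgraph of G induced by the vertices strictly between u and v has chromatic number at least 2^b. -/

import Mathlib

open SimpleGraph

namespace Stmt0Aux

attribute [local instance] Classical.propDecidable

variable {n : ℕ} (G : SimpleGraph (Fin n))

/-- `S` induces a `t`-colorable subgraph. -/
def col (S : Set (Fin n)) (t : ℕ) : Prop := (G.induce S).Colorable t

lemma col_mono {S T : Set (Fin n)} (h : S ⊆ T) {t : ℕ} (hc : col G T t) : col G S t :=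
  Colorable.of_hom (G.induceHomOfLE h).toHom hc

lemma col_subsingleton {S : Set (Fin n)} {t : ℕ} (hS : ∀ v ∈ S, ∀ w ∈ S, v = w)
    (ht : 0 < t) : col G S t := by
  refine ⟨Coloring.mk (fun _ => ⟨0, ht⟩) ?_⟩
  rintro ⟨v, hv⟩ ⟨w, hw⟩ hvw
  have : v = w := hS v hv w hw
  subst this
  exact absurd hvw (by simp)

lemma col_subsingleton' {S : Set (Fin n)} {t : ℕ} (hS : ∀ v ∈ S, False) : col G S t := by
  refine ⟨Coloring.mk (fun v => absurd v.2 (hS v.1)) ?_⟩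
  rintro ⟨v, hv⟩
  exact absurd hv (hS v)

lemma col_union {A B : Set (Fin n)} {s t : ℕ} (hA : col G A s) (hB : col G B t) :
    col G (A ∪ B) (s + t) := by
  obtain ⟨cA⟩ := hA
  obtain ⟨cB⟩ := hB
  have C : (G.induce (A ∪ B)).Coloring (Fin s ⊕ Fin t) := by
    refine Coloring.mk (fun v => if h : v.1 ∈ A then Sum.inl (cA ⟨v.1, h⟩)
      else Sum.inr (cB ⟨v.1, v.2.resolve_left h⟩)) ?_
    rintro ⟨v, hv⟩ ⟨w, hw⟩ hvw
    have hadj : G.Adj v w := by simpa using hvw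
    dsimp only
    by_cases hvA : v ∈ A <;> by_cases hwA : w ∈ A
    · rw [dif_pos hvA, dif_pos hwA]
      intro heq
      exact cA.valid (show (G.induce A).Adj ⟨v, hvA⟩ ⟨w, hwA⟩ from by simpa using hadj)
        (Sum.inl.inj heq)
    · rw [dif_pos hvA, dif_neg hwA]; simp
    · rw [dif_neg hvA, dif_pos hwA]; simp
    · rw [dif_neg hvA, dif_neg hwA]
      intro heq
      exact cB.valid (show (G.induce B).Adj ⟨v, hv.resolve_left hvA⟩ ⟨w, hw.resolve_left hwA⟩
        from by simpa using hadj) (Sum.inr.inj heq)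
  simpa [col] using C.colorable

lemma col_fiber {S : Set (Fin n)} {t : ℕ} (g : Fin n → ℕ) (s : ℕ)
    (h : ∀ i < s, col G (S ∩ {v | g v = i}) t) : col G (S ∩ {v | g v < s}) (s * t) := by
  induction s with
  | zero =>
    refine col_subsingleton' G ?_
    intro v hv
    exact absurd hv.2 (Nat.not_lt_zero _)
  | succ s ih =>
    have h1 : col G ((S ∩ {v | g v < s}) ∪ (S ∩ {v | g v = s})) (s * t + t) :=
      col_union G (ih (fun i hi => h i (by omega))) (h s (by omega))
    refine (col_mono G ?_ h1).mono (by ring_nf; exact le_rfl)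
    intro v hv
    rcases Nat.lt_succ_iff_lt_or_eq.mp hv.2 with h' | h'
    · exact Or.inl ⟨hv.1, h'⟩
    · exact Or.inr ⟨hv.1, h'⟩

lemma col_insert {S : Set (Fin n)} {t : ℕ} (x : Fin n) (h : col G S t) :
    col G (insert x S) (t + 1) := by
  obtain ⟨c⟩ := h
  have C : (G.induce (insert x S)).Coloring (Option (Fin t)) := by
    refine Coloring.mk (fun v => if h : v.1 = x then none else
      some (c ⟨v.1, v.2.resolve_left h⟩)) ?_
    rintro ⟨v, hv⟩ ⟨w, hw⟩ hvw
    have hadj : G.Adj v w := by simpa using hvw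
    dsimp only
    by_cases hvx : v = x <;> by_cases hwx : w = x
    · subst hvx; subst hwx; exact absurd hadj (by simp)
    · rw [dif_pos hvx, dif_neg hwx]; simp
    · rw [dif_neg hvx, dif_pos hwx]; simp
    · rw [dif_neg hvx, dif_neg hwx]
      intro heq
      exact c.valid (show (G.induce S).Adj ⟨v, hv.resolve_left hvx⟩ ⟨w, hw.resolve_left hwx⟩
        from by simpa using hadj) (Option.some.inj heq)
  simpa [col] using C.colorable

lemma col_univ_iff {k : ℕ} : col G Set.univ k ↔ G.Colorable k := by
  constructor
  · rintro ⟨c⟩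
    exact ⟨Coloring.mk (fun v => c ⟨v, trivial⟩)
      (fun hvw => c.valid (by simpa using hvw))⟩
  · rintro ⟨c⟩
    exact ⟨Coloring.mk (fun v => c v.1) (fun hvw => c.valid (by simpa using hvw))⟩

/-- Greedy block boundaries: `blk G t (j+1)` is the largest `m ≤ n` such that the
vertices in `[blk G t j, m)` induce a `t`-colorable subgraph. -/
noncomputable def blk (t : ℕ) : ℕ → ℕ
  | 0 => 0
  | j + 1 => Nat.findGreatest
      (fun m => col G {v : Fin n | blk t j ≤ v.1 ∧ v.1 < m} t) n

variable {t : ℕ}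

lemma blk_zero : blk G t 0 = 0 := by rw [blk]

lemma blk_succ_def (j : ℕ) : blk G t (j + 1) =
    Nat.findGreatest (fun m => col G {v : Fin n | blk G t j ≤ v.1 ∧ v.1 < m} t) n := by
  rw [blk]

lemma blk_le (j : ℕ) : blk G t j ≤ n := by
  cases j with
  | zero => exact Nat.zero_le n
  | succ j => rw [blk_succ_def]; exact Nat.findGreatest_le n

lemma colP_self (ht : 0 < t) (j : ℕ) {m : ℕ} (hm : m ≤ blk G t j) :
    col G {v : Fin n | blk G t j ≤ v.1 ∧ v.1 < m} t :=
  col_subsingleton G (fun v hv w hw => absurd (lt_of_le_of_lt hv.1 hv.2)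
    (by exact fun h => absurd (lt_of_lt_of_le h hm) (lt_irrefl _))) ht

lemma blk_le_succ (ht : 0 < t) (j : ℕ) : blk G t j ≤ blk G t (j + 1) := by
  rw [blk_succ_def]
  exact Nat.le_findGreatest (blk_le G j) (colP_self G ht j le_rfl)

lemma blk_mono (ht : 0 < t) {j k : ℕ} (h : j ≤ k) : blk G t j ≤ blk G t k := by
  induction k with
  | zero => exact Nat.le_zero.mp h ▸ le_rfl
  | succ k ih =>
    rcases Nat.lt_succ_iff_lt_or_eq.mp (Nat.lt_succ_of_le h) with h' | h'
    · exact le_trans (ih (by omega)) (blk_le_succ G ht k)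
    · exact h' ▸ le_rfl

lemma blk_colorable (ht : 0 < t) (j : ℕ) :
    col G {v : Fin n | blk G t j ≤ v.1 ∧ v.1 < blk G t (j + 1)} t := by
  have := Nat.findGreatest_spec (m := blk G t j)
    (P := fun m => col G {v : Fin n | blk G t j ≤ v.1 ∧ v.1 < m} t)
    (blk_le G j) (colP_self G ht j le_rfl)
  rwa [← blk_succ_def] at this

lemma blk_max (j : ℕ) (h : blk G t (j + 1) < n) :
    ¬ col G {v : Fin n | blk G t j ≤ v.1 ∧ v.1 < blk G t (j + 1) + 1} t := by
  refine Nat.findGreatest_is_greatest (P := fun m => col G {v : Fin n | blk G t j ≤ v.1 ∧ v.1 < m} t)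
    (n := n) ?_ h
  rw [← blk_succ_def]
  exact Nat.lt_succ_self _

lemma blk_strict (ht : 0 < t) (j : ℕ) (h : blk G t j < n) :
    blk G t j + 1 ≤ blk G t (j + 1) := by
  rw [blk_succ_def]
  refine Nat.le_findGreatest h ?_
  exact col_subsingleton G (fun v hv w hw => Fin.ext (by
    obtain ⟨h1, h2⟩ := hv; obtain ⟨h3, h4⟩ := hw; omega)) ht

lemma blk_ge (ht : 0 < t) (j : ℕ) : min j n ≤ blk G t j := by
  induction j with
  | zero => simp
  | succ j ih =>
    by_cases h : blk G t j < n
    · have := blk_strict G ht j h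
      omega
    · have := blk_le_succ G ht j
      omega

end Stmt0Aux

open Stmt0Aux

/-- Lemma (sequence): if an ordered graph `G` on `Fin n` has chromatic number greater
than `2 ^ (a + b + 1)`, then there is a set of vertices `H` whose induced subgraph has
chromatic number greater than `2 ^ a`, and for every edge `u v` of that induced subgraph
with `u < v`, the subgraph induced by the vertices strictly between `u` and `v` has
chromatic number at least `2 ^ b`. -/
theorem stmt0 (n a b : ℕ) (G : SimpleGraph (Fin n))
    (hχ : (2 ^ (a + b + 1) : ℕ∞) < G.chromaticNumber) :
    ∃ H : Set (Fin n),
      (2 ^ a : ℕ∞) < (G.induce H).chromaticNumber ∧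
      ∀ u v : Fin n, u ∈ H → v ∈ H → G.Adj u v → u < v →
        (2 ^ b : ℕ∞) ≤ (G.induce {w : Fin n | u < w ∧ w < v}).chromaticNumber := by
  classical
  have ht : 0 < 2 ^ b := pow_pos (by norm_num) b
  have hcast : ∀ k : ℕ, ((2 ^ k : ℕ) : ℕ∞) = (2 ^ k : ℕ∞) := by
    intro k; push_cast; ring
  have hGn : ¬ G.Colorable (2 ^ (a + b + 1)) := by
    intro hc
    have h1 := hc.chromaticNumber_le
    rw [hcast] at h1
    exact absurd h1 (not_le_of_gt hχ)
  set β : Fin n → ℕ := fun v => Nat.findGreatest (fun j => blk G (2 ^ b) j ≤ v.1) n with hβdef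
  have hβ1 : ∀ v : Fin n, blk G (2 ^ b) (β v) ≤ v.1 := by
    intro v
    rw [hβdef]
    exact Nat.findGreatest_spec (P := fun j => blk G (2 ^ b) j ≤ v.1) (m := 0)
      (Nat.zero_le n) (by show blk G (2 ^ b) 0 ≤ v.1; rw [blk_zero]; exact Nat.zero_le _)
  have hβle : ∀ v : Fin n, β v ≤ n := by
    intro v; rw [hβdef]; exact Nat.findGreatest_le n
  have hblkn : (n : ℕ) ≤ blk G (2 ^ b) n := by
    have := blk_ge G ht n; simpa using this
  have hβlt : ∀ v : Fin n, β v < n := by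
    intro v
    rcases lt_or_eq_of_le (hβle v) with h | h
    · exact h
    · exfalso
      have h1 := hβ1 v
      rw [h] at h1
      have := v.isLt
      omega
  have hβ2 : ∀ v : Fin n, v.1 < blk G (2 ^ b) (β v + 1) := by
    intro v
    by_contra hcon
    push_neg at hcon
    have h1 : β v + 1 ≤ β v := by
      conv_rhs => rw [hβdef]
      exact Nat.le_findGreatest (by have := hβlt v; omega) hcon
    omega
  have hβmono : ∀ u v : Fin n, u ≤ v → β u ≤ β v := by
    intro u v huv
    conv_rhs => rw [hβdef]
    exact Nat.le_findGreatest (hβle u) (le_trans (hβ1 u) (Fin.le_def.mp huv))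
  -- parity split
  have hsplit : ∃ ε : ℕ, ¬ col G {v : Fin n | β v % 2 = ε} (2 ^ (a + b)) := by
    by_contra hcon
    push_neg at hcon
    have hu := col_union G (hcon 0) (hcon 1)
    have hsub : Set.univ ⊆ {v : Fin n | β v % 2 = 0} ∪ {v : Fin n | β v % 2 = 1} := by
      intro v _
      rcases Nat.mod_two_eq_zero_or_one (β v) with h | h
      · exact Or.inl h
      · exact Or.inr h
    have hcu := (col_univ_iff G).mp (col_mono G hsub hu)
    exact hGn (hcu.mono (le_of_eq (by ring)))
  obtain ⟨ε, hP⟩ := hsplit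
  -- block colorings
  have c : ∀ j : ℕ, (G.induce {v : Fin n | blk G (2 ^ b) j ≤ v.1 ∧
      v.1 < blk G (2 ^ b) (j + 1)}).Coloring (Fin (2 ^ b)) :=
    fun j => Nonempty.some (blk_colorable G ht j)
  have key : ∀ j k : ℕ, j = k → ∀ (x : Fin n) (hx : x ∈ {v : Fin n | blk G (2 ^ b) j ≤ v.1 ∧
      v.1 < blk G (2 ^ b) (j + 1)}) (hx' : x ∈ {v : Fin n | blk G (2 ^ b) k ≤ v.1 ∧
      v.1 < blk G (2 ^ b) (k + 1)}), c j ⟨x, hx⟩ = c k ⟨x, hx'⟩ := by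
    intro j k h x hx hx'
    subst h
    rfl
  set g : Fin n → ℕ := fun v => (c (β v) ⟨v, ⟨hβ1 v, hβ2 v⟩⟩).1 with hgdef
  have hgt : ∀ v : Fin n, g v < 2 ^ b := by
    intro v; rw [hgdef]; exact Fin.is_lt _
  -- fiber argument
  have hfib : ∃ i, i < 2 ^ b ∧ ¬ col G ({v : Fin n | β v % 2 = ε} ∩ {v | g v = i}) (2 ^ a) := by
    by_contra hcon
    push_neg at hcon
    have hall := col_fiber G g (2 ^ b) (fun i hi => hcon i hi)
    have hPeq : ({v : Fin n | β v % 2 = ε} ∩ {v | g v < 2 ^ b}) = {v : Fin n | β v % 2 = ε} := by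
      ext v
      exact ⟨fun h => h.1, fun h => ⟨h, hgt v⟩⟩
    rw [hPeq] at hall
    exact hP (hall.mono (le_of_eq (by rw [← pow_add, add_comm])))
  obtain ⟨i, hit, hH⟩ := hfib
  refine ⟨{v : Fin n | β v % 2 = ε} ∩ {v | g v = i}, ?_, ?_⟩
  · by_contra hcon
    push_neg at hcon
    rw [← hcast a] at hcon
    exact hH (chromaticNumber_le_iff_colorable.mp hcon)
  · intro u v hu hv hadj huv
    have hne : β u ≠ β v := by
      intro he
      have hvmem : v ∈ {w : Fin n | blk G (2 ^ b) (β u) ≤ w.1 ∧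
          w.1 < blk G (2 ^ b) (β u + 1)} := ⟨he ▸ hβ1 v, he ▸ hβ2 v⟩
      have h1 : c (β u) ⟨v, hvmem⟩ = c (β v) ⟨v, ⟨hβ1 v, hβ2 v⟩⟩ := key _ _ he v hvmem _
      have h2 : (c (β u) ⟨u, ⟨hβ1 u, hβ2 u⟩⟩).1 = (c (β u) ⟨v, hvmem⟩).1 := by
        rw [h1]
        show g u = g v
        rw [hu.2, hv.2]
      exact (c (β u)).valid (show (G.induce {w : Fin n | blk G (2 ^ b) (β u) ≤ w.1 ∧
          w.1 < blk G (2 ^ b) (β u + 1)}).Adj ⟨u, ⟨hβ1 u, hβ2 u⟩⟩ ⟨v, hvmem⟩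
          from by simpa using hadj) (Fin.val_inj.mp h2)
    have hβlt2 : β u < β v := lt_of_le_of_ne (hβmono u v (le_of_lt huv)) hne
    have hpar : β u + 2 ≤ β v := by
      have h1 : β u % 2 = ε := hu.1
      have h2 : β v % 2 = ε := hv.1
      omega
    have hblkv : blk G (2 ^ b) (β u + 1 + 1) ≤ v.1 :=
      le_trans (blk_mono G ht (by omega)) (hβ1 v)
    have hblkn' : blk G (2 ^ b) (β u + 1 + 1) < n := lt_of_le_of_lt hblkv v.isLt
    have hnotcol : ¬ col G {w : Fin n | blk G (2 ^ b) (β u + 1) ≤ w.1 ∧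
        w.1 < blk G (2 ^ b) (β u + 1 + 1)} (2 ^ b - 1) := by
      intro hcol
      have hins := col_insert G (⟨blk G (2 ^ b) (β u + 1 + 1), hblkn'⟩ : Fin n) hcol
      rw [Nat.sub_add_cancel ht] at hins
      refine blk_max G (β u + 1) hblkn' (col_mono G ?_ hins)
      intro w hw
      rcases Nat.lt_succ_iff_lt_or_eq.mp hw.2 with h' | h'
      · exact Set.mem_insert_iff.mpr (Or.inr ⟨hw.1, h'⟩)
      · exact Set.mem_insert_iff.mpr (Or.inl (Fin.ext h'))
    have hsub : {w : Fin n | blk G (2 ^ b) (β u + 1) ≤ w.1 ∧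
        w.1 < blk G (2 ^ b) (β u + 1 + 1)} ⊆ {w : Fin n | u < w ∧ w < v} := by
      intro w hw
      constructor
      · exact Fin.lt_def.mpr (lt_of_lt_of_le (hβ2 u) hw.1)
      · exact Fin.lt_def.mpr (lt_of_lt_of_le hw.2 hblkv)
    have hfinal : ¬ col G {w : Fin n | u < w ∧ w < v} (2 ^ b - 1) :=
      fun hcol => hnotcol (col_mono G hsub hcol)
    have hlt' : ((2 ^ b - 1 : ℕ) : ℕ∞) <
        (G.induce {w : Fin n | u < w ∧ w < v}).chromaticNumber := by
      by_contra hcon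
      push_neg at hcon
      exact hfinal (chromaticNumber_le_iff_colorable.mp hcon)
    have hle := (ENat.add_one_le_iff (ENat.coe_ne_top _)).mpr hlt'
    have heq : ((2 ^ b - 1 : ℕ) : ℕ∞) + 1 = (2 ^ b : ℕ∞) := by
      rw [← hcast b]
      exact_mod_cast congrArg (Nat.cast : ℕ → ℕ∞) (Nat.sub_add_cancel ht)
    rwa [heq] at hle
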